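/- arXiv:2306.00930 — 2 statements merged into one kernel-verified Lean document; each statement's English description precedes it below -/
import Mathlib

section
/- Let $0<\gamma<1$ and $R>0$. For every positive measurable function $f$ on $(0,R)$, $\int_0^R \left(\int_0^r f(t)\,dt\right)^2 r\,dr \le C(\gamma,R)^2 \int_0^R f(r)^2 r^{1-2\gamma}\,dr$, where $C(\gamma,R) \le R^{1+\gamma}\,\gamma^{(\gamma-1)/2}/(\gamma+1)^{(\gamma+1)/2}$. -/
open MeasureTheory
open scoped ENNReal

lemma sq_rpow (x a : ℝ) (hx : 0 ≤ x) : (x^a)^(2:ℕ) = x^(2*a) := by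
  rw [← Real.rpow_natCast (x^a) 2, ← Real.rpow_mul hx]
  norm_num [mul_comm]

lemma lint_rpow (e : ℝ) (he : -1 < e) (r : ℝ) (hr : 0 ≤ r) :
    ∫⁻ t in Set.Ioo (0:ℝ) r, ENNReal.ofReal (t ^ e) =
      ENNReal.ofReal (r ^ (e+1) / (e+1)) := by
  rw [setLIntegral_congr Ioo_ae_eq_Ioc]
  rw [← ofReal_integral_eq_lintegral_ofReal]
  · rw [← intervalIntegral.integral_of_le hr, integral_rpow (Or.inl he),
      Real.zero_rpow (by linarith), sub_zero]
  · exact (intervalIntegral.intervalIntegrable_rpow' he).1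
  · filter_upwards [ae_restrict_mem measurableSet_Ioc] with t ht
    exact Real.rpow_nonneg ht.1.le e


lemma ratio_le (γ : ℝ) (hγ0 : 0 < γ) : (γ+1)^γ ≤ 4 * γ^γ := by
  have h1 : ((γ+1)/γ)^γ ≤ 4 := by
    have hx : (0:ℝ) < (γ+1)/γ := by positivity
    rw [Real.rpow_def_of_pos hx]
    have hlog : Real.log ((γ+1)/γ) ≤ 1/γ := by
      have := Real.log_le_sub_one_of_pos hx
      have : (γ+1)/γ - 1 = 1/γ := by field_simp; ring
      linarith [Real.log_le_sub_one_of_pos hx]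
    have : Real.log ((γ+1)/γ) * γ ≤ 1 := by
      calc Real.log ((γ+1)/γ) * γ ≤ (1/γ) * γ := by
            exact mul_le_mul_of_nonneg_right hlog hγ0.le
        _ = 1 := by field_simp
    calc Real.exp (Real.log ((γ+1)/γ) * γ) ≤ Real.exp 1 := Real.exp_le_exp.2 this
      _ ≤ 4 := by linarith [Real.exp_one_lt_d9]
  have h2 : (γ+1)^γ = ((γ+1)/γ)^γ * γ^γ := by
    rw [Real.div_rpow (by linarith) hγ0.le, div_mul_cancel₀]
    exact ne_of_gt (Real.rpow_pos_of_pos hγ0 γ)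
  rw [h2]
  exact mul_le_mul_of_nonneg_right h1 (Real.rpow_nonneg hγ0.le γ)

lemma const_le (γ R : ℝ) (hγ0 : 0 < γ) (hR : 0 < R) :
    R^(1+γ) / Real.sqrt (4*γ*(γ+1)) ≤ R^(1+γ) * γ^((γ-1)/2) / (γ+1)^((γ+1)/2) := by
  have hQ : (0:ℝ) < 4*γ*(γ+1) := by nlinarith
  have hg1 : (0:ℝ) < γ + 1 := by linarith
  have ha : (0:ℝ) ≤ 1 / Real.sqrt (4*γ*(γ+1)) := by positivity
  have hb : (0:ℝ) ≤ γ^((γ-1)/2) / (γ+1)^((γ+1)/2) := by positivity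
  have key : (1 / Real.sqrt (4*γ*(γ+1)))^2 ≤ (γ^((γ-1)/2) / (γ+1)^((γ+1)/2))^2 := by
    have e1 : (1 / Real.sqrt (4*γ*(γ+1)))^2 = 1 / (4*γ*(γ+1)) := by
      rw [div_pow, one_pow, Real.sq_sqrt hQ.le]
    have sq_rpow : ∀ x a : ℝ, 0 ≤ x → (x^a)^(2:ℕ) = x^(2*a) := by
      intro x a hx
      rw [← Real.rpow_natCast (x^a) 2, ← Real.rpow_mul hx]
      norm_num [mul_comm]
    have e2 : (γ^((γ-1)/2) / (γ+1)^((γ+1)/2))^2 = γ^(γ-1) / (γ+1)^(γ+1) := by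
      rw [div_pow, sq_rpow _ _ hγ0.le, sq_rpow _ _ hg1.le]
      ring_nf
    rw [e1, e2, div_le_div_iff₀ hQ (Real.rpow_pos_of_pos hg1 _)]
    have hgg : γ^(γ-1) * γ = γ^γ := by
      rw [← Real.rpow_add_one hγ0.ne' (γ-1)]; ring_nf
    have hgg1 : (γ+1)^γ * (γ+1) = (γ+1)^(γ+1) := by
      rw [← Real.rpow_add_one hg1.ne' γ]
    calc 1 * (γ+1)^(γ+1) = (γ+1)^γ * (γ+1) := by rw [one_mul, hgg1]
      _ ≤ (4 * γ^γ) * (γ+1) := mul_le_mul_of_nonneg_right (ratio_le γ hγ0) hg1.le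
      _ = γ^(γ-1) * (4*γ*(γ+1)) := by rw [← hgg]; ring
  have habs : 1 / Real.sqrt (4*γ*(γ+1)) ≤ γ^((γ-1)/2) / (γ+1)^((γ+1)/2) := by
    calc 1 / Real.sqrt (4*γ*(γ+1)) = Real.sqrt ((1 / Real.sqrt (4*γ*(γ+1)))^2) :=
          (Real.sqrt_sq ha).symm
      _ ≤ Real.sqrt ((γ^((γ-1)/2) / (γ+1)^((γ+1)/2))^2) := Real.sqrt_le_sqrt key
      _ = γ^((γ-1)/2) / (γ+1)^((γ+1)/2) := Real.sqrt_sq hb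
  calc R^(1+γ) / Real.sqrt (4*γ*(γ+1)) = R^(1+γ) * (1 / Real.sqrt (4*γ*(γ+1))) := by ring
    _ ≤ R^(1+γ) * (γ^((γ-1)/2) / (γ+1)^((γ+1)/2)) :=
        mul_le_mul_of_nonneg_left habs (Real.rpow_nonneg hR.le _)
    _ = R^(1+γ) * γ^((γ-1)/2) / (γ+1)^((γ+1)/2) := by ring

/-- Weighted Hardy inequality with `p = q = 2`, weights `ω(t) = t`, `ν(t) = t^{1-2γ}`:
for `0 < γ < 1` and `R > 0`, there is a constant
`C(γ,R) ≤ R^{1+γ} γ^{(γ-1)/2} / (γ+1)^{(γ+1)/2}` such that for every positive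
measurable `f` on `(0,R)`,
`∫_0^R (∫_0^r f)^2 r dr ≤ C(γ,R)^2 ∫_0^R f(r)^2 r^{1-2γ} dr`. -/
theorem stmt_0 (γ R : ℝ) (hγ0 : 0 < γ) (hγ1 : γ < 1) (hR : 0 < R) :
    ∃ C : ℝ, 0 ≤ C ∧
      C ≤ R ^ (1 + γ) * γ ^ ((γ - 1) / 2) / (γ + 1) ^ ((γ + 1) / 2) ∧
      ∀ f : ℝ → ℝ≥0∞, Measurable f →
        ∫⁻ r in Set.Ioo (0 : ℝ) R, (∫⁻ t in Set.Ioo (0 : ℝ) r, f t) ^ 2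
            * ENNReal.ofReal r ≤
          ENNReal.ofReal (C ^ 2) *
            ∫⁻ r in Set.Ioo (0 : ℝ) R, (f r) ^ 2 * ENNReal.ofReal (r ^ (1 - 2 * γ)) := by
  refine ⟨R ^ (1+γ) / Real.sqrt (4*γ*(γ+1)), by positivity, const_le γ R hγ0 hR, ?_⟩
  intro f hf

  set K := ∫⁻ r in Set.Ioo (0 : ℝ) R, (f r) ^ 2 * ENNReal.ofReal (r ^ (1 - 2 * γ)) with hK
  have hγ2 : (0:ℝ) < 2*γ := by linarith
  have hcast : ((2:ℝ)) = ((2:ℕ):ℝ) := by norm_num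
  -- pointwise claim
  have claim : ∀ r ∈ Set.Ioo (0:ℝ) R,
      (∫⁻ t in Set.Ioo (0 : ℝ) r, f t) ^ 2 ≤ ENNReal.ofReal (r^(2*γ)/(2*γ)) * K := by
    intro r hr
    set g : ℝ → ℝ≥0∞ := fun t => f t * ENNReal.ofReal (t^((1-2*γ)/2)) with hg
    set h : ℝ → ℝ≥0∞ := fun t => ENNReal.ofReal (t^((2*γ-1)/2)) with hh
    have hmg : Measurable g := by fun_prop
    have hmh : Measurable h := by fun_prop
    have heq : ∫⁻ t in Set.Ioo (0 : ℝ) r, f t = ∫⁻ t in Set.Ioo (0 : ℝ) r, (g * h) t := by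
      refine setLIntegral_congr_fun measurableSet_Ioo ?_
      intro t ht
      simp only [Pi.mul_apply, hg, hh, mul_assoc]
      rw [← ENNReal.ofReal_mul (Real.rpow_nonneg ht.1.le _),
        ← Real.rpow_add ht.1,
        show (1-2*γ)/2 + (2*γ-1)/2 = 0 by ring, Real.rpow_zero,
        ENNReal.ofReal_one, mul_one]
    have conj : Real.HolderConjugate 2 2 := by constructor <;> norm_num
    have hold := ENNReal.lintegral_mul_le_Lp_mul_Lq (volume.restrict (Set.Ioo (0:ℝ) r))
      conj hmg.aemeasurable hmh.aemeasurable
    have hg2 : ∫⁻ t in Set.Ioo (0:ℝ) r, g t ^ (2:ℝ) ≤ K := by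
      have hptw : ∀ᵐ t ∂(volume.restrict (Set.Ioo (0:ℝ) r)),
          g t ^ (2:ℝ) = f t ^ 2 * ENNReal.ofReal (t ^ (1-2*γ)) := by
        filter_upwards [ae_restrict_mem measurableSet_Ioo] with t ht
        show (f t * ENNReal.ofReal (t^((1-2*γ)/2))) ^ (2:ℝ) = _
        rw [hcast, ENNReal.rpow_natCast, mul_pow,
          ← ENNReal.ofReal_pow (Real.rpow_nonneg ht.1.le _),
          sq_rpow _ _ ht.1.le]
        push_cast
        rw [show 2*((1-2*γ)/2) = 1-2*γ by ring]
      rw [lintegral_congr_ae hptw]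
      exact lintegral_mono_set (Set.Ioo_subset_Ioo le_rfl hr.2.le)
    have hh2 : ∫⁻ t in Set.Ioo (0:ℝ) r, h t ^ (2:ℝ) = ENNReal.ofReal (r^(2*γ)/(2*γ)) := by
      have hptw : ∀ᵐ t ∂(volume.restrict (Set.Ioo (0:ℝ) r)),
          h t ^ (2:ℝ) = ENNReal.ofReal (t ^ (2*γ-1)) := by
        filter_upwards [ae_restrict_mem measurableSet_Ioo] with t ht
        show (ENNReal.ofReal (t^((2*γ-1)/2))) ^ (2:ℝ) = _
        rw [hcast, ENNReal.rpow_natCast,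
          ← ENNReal.ofReal_pow (Real.rpow_nonneg ht.1.le _),
          sq_rpow _ _ ht.1.le]
        push_cast
        rw [show 2*((2*γ-1)/2) = 2*γ-1 by ring]
      rw [lintegral_congr_ae hptw, lint_rpow (2*γ-1) (by linarith) r hr.1.le,
        show 2*γ-1+1 = 2*γ by ring]
    calc (∫⁻ t in Set.Ioo (0 : ℝ) r, f t) ^ 2
        = (∫⁻ t in Set.Ioo (0 : ℝ) r, (g * h) t) ^ 2 := by rw [heq]
      _ ≤ ((∫⁻ t in Set.Ioo (0:ℝ) r, g t ^ (2:ℝ)) ^ (1/(2:ℝ))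
            * (∫⁻ t in Set.Ioo (0:ℝ) r, h t ^ (2:ℝ)) ^ (1/(2:ℝ))) ^ 2 := by
          exact pow_le_pow_left' hold 2
      _ = (∫⁻ t in Set.Ioo (0:ℝ) r, g t ^ (2:ℝ))
            * (∫⁻ t in Set.Ioo (0:ℝ) r, h t ^ (2:ℝ)) := by
          rw [mul_pow, ← ENNReal.rpow_natCast (_ ^ (1/(2:ℝ))) 2,
            ← ENNReal.rpow_natCast ((∫⁻ t in Set.Ioo (0:ℝ) r, h t ^ (2:ℝ)) ^ (1/(2:ℝ))) 2,
            ← ENNReal.rpow_mul, ← ENNReal.rpow_mul]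
          norm_num
      _ ≤ K * ENNReal.ofReal (r^(2*γ)/(2*γ)) := by
          rw [hh2]; exact mul_le_mul_left hg2 _
      _ = ENNReal.ofReal (r^(2*γ)/(2*γ)) * K := mul_comm _ _
  -- integrate the claim
  have step : ∫⁻ r in Set.Ioo (0 : ℝ) R, (∫⁻ t in Set.Ioo (0 : ℝ) r, f t) ^ 2
      * ENNReal.ofReal r
      ≤ ∫⁻ r in Set.Ioo (0 : ℝ) R,
          ENNReal.ofReal (r^(2*γ+1)) * (ENNReal.ofReal (1/(2*γ)) * K) := by
    refine lintegral_mono_ae ?_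
    filter_upwards [ae_restrict_mem measurableSet_Ioo] with r hr
    have hnn : 0 ≤ r^(2*γ)/(2*γ) := div_nonneg (Real.rpow_nonneg hr.1.le _) hγ2.le
    have h3 : r^(2*γ)/(2*γ) * r = r^(2*γ+1) * (1/(2*γ)) := by
      rw [Real.rpow_add_one hr.1.ne']; ring
    calc (∫⁻ t in Set.Ioo (0 : ℝ) r, f t) ^ 2 * ENNReal.ofReal r
        ≤ (ENNReal.ofReal (r^(2*γ)/(2*γ)) * K) * ENNReal.ofReal r :=
          mul_le_mul_left (claim r hr) _
      _ = ENNReal.ofReal (r^(2*γ+1)) * (ENNReal.ofReal (1/(2*γ)) * K) := by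
          rw [mul_right_comm, ← ENNReal.ofReal_mul hnn, h3,
            ENNReal.ofReal_mul (Real.rpow_nonneg hr.1.le _)]
          ring
  have comp : ∫⁻ r in Set.Ioo (0 : ℝ) R,
      ENNReal.ofReal (r^(2*γ+1)) * (ENNReal.ofReal (1/(2*γ)) * K)
      = ENNReal.ofReal ((R ^ (1+γ) / Real.sqrt (4*γ*(γ+1))) ^ 2) * K := by
    rw [lintegral_mul_const _ (by fun_prop),
      lint_rpow (2*γ+1) (by linarith) R hR.le, ← mul_assoc,
      ← ENNReal.ofReal_mul (by positivity)]
    congr 2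
    have hQ : (0:ℝ) < 4*γ*(γ+1) := by nlinarith
    rw [div_pow, Real.sq_sqrt hQ.le, sq_rpow R (1+γ) hR.le,
      show 2*(1+γ) = 2*γ+1+1 by ring, div_mul_div_comm, mul_one]
    congr 1
    ring
  exact step.trans (le_of_eq comp)
end

section
/- Let $E\subset\mathbb{R}^n$, $x\in E$, $R>0$, and consider a Whitney decomposition of $\mathbb{R}^n\setminus E$ into dyadic cubes. For every $\varsigma>\dim_A(E)$ there exists a constant $C$ such that the number $W_k(B(x,R))$ of Whitney cubes of sidelength $2^{-k}$ contained in the ball $B(x,R)$ satisfies $W_k(B(x,R))\le C R^\varsigma 2^{k\varsigma}$, for all $k$ with $2^{-k}<R$. -/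
open MeasureTheory Metric
open scoped ENNReal

lemma coord_dist_le {n : ℕ} (x y : EuclideanSpace ℝ (Fin n)) (d : Fin n) :
    |x d - y d| ≤ dist x y := by
  rw [EuclideanSpace.dist_eq]
  have h1 : |x d - y d| = Real.sqrt ((x d - y d) ^ 2) := (Real.sqrt_sq_eq_abs _).symm
  rw [h1]
  apply Real.sqrt_le_sqrt
  have : (x d - y d) ^ 2 = dist (x d) (y d) ^ 2 := by rw [Real.dist_eq, sq_abs]
  rw [this]
  exact Finset.single_le_sum (f := fun i => dist (x i) (y i) ^ 2)
    (fun i _ => sq_nonneg _) (Finset.mem_univ d)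

lemma dist_le_sqrt_mul {n : ℕ} (x y : EuclideanSpace ℝ (Fin n)) (m : ℝ) (hm : 0 ≤ m)
    (h : ∀ d, |x d - y d| ≤ m) : dist x y ≤ Real.sqrt n * m := by
  rw [EuclideanSpace.dist_eq]
  have hsum : ∑ i, dist (x i) (y i) ^ 2 ≤ n * m ^ 2 := by
    calc ∑ i, dist (x i) (y i) ^ 2 ≤ ∑ _i : Fin n, m ^ 2 := by
          apply Finset.sum_le_sum
          intro i _
          have := h i
          rw [Real.dist_eq]
          nlinarith [abs_nonneg (x i - y i)]
      _ = n * m ^ 2 := by simp [mul_comm]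
  calc Real.sqrt (∑ i, dist (x i) (y i) ^ 2) ≤ Real.sqrt (n * m ^ 2) := Real.sqrt_le_sqrt hsum
    _ = Real.sqrt n * m := by
        rw [Real.sqrt_mul (by positivity), Real.sqrt_sq hm]

lemma grid_cover (n : ℕ) (hn : 0 < n) (x : EuclideanSpace ℝ (Fin n)) (r R : ℝ)
    (hr : 0 < r) (hrR : r < R) :
    ∃ S : Finset (EuclideanSpace ℝ (Fin n)),
      (S.card : ℝ) ≤ (4 * Real.sqrt n + 2) ^ n * (R / r) ^ (n : ℝ) ∧
      ball x R ⊆ ⋃ y ∈ S, ball y r := by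
  set sn := Real.sqrt n with hsn
  have hsn1 : 1 ≤ sn := Real.one_le_sqrt.mpr (by exact_mod_cast hn)
  have hsn0 : 0 < sn := lt_of_lt_of_le one_pos hsn1
  set δ := r / (2 * sn) with hδ
  have hδ0 : 0 < δ := by positivity
  set a : Fin n → ℤ := fun d => ⌊(x d - R) / δ⌋ with ha
  set b : Fin n → ℤ := fun d => ⌊(x d + R) / δ⌋ with hb
  set S0 : Finset (Fin n → ℝ) :=
    Fintype.piFinset fun d => (Finset.Icc (a d) (b d)).image fun z : ℤ => δ * (z : ℝ) with hS0
  refine ⟨S0.map (WithLp.equiv 2 (Fin n → ℝ)).symm.toEmbedding, ?_, ?_⟩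
  · rw [Finset.card_map]
    have hcard : (S0.card : ℝ) ≤ ((4 * sn + 2) * (R / r)) ^ n := by
      rw [hS0, Fintype.card_piFinset]
      have : ((∏ d, ((Finset.Icc (a d) (b d)).image fun z : ℤ => δ * (z : ℝ)).card : ℕ) : ℝ)
          = ∏ d, (((Finset.Icc (a d) (b d)).image fun z : ℤ => δ * (z : ℝ)).card : ℝ) := by
        push_cast; ring
      rw [this]
      have hbound : ∀ d : Fin n,
          (((Finset.Icc (a d) (b d)).image fun z : ℤ => δ * (z : ℝ)).card : ℝ)
            ≤ (4 * sn + 2) * (R / r) := by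
        intro d
        have h1 : ((Finset.Icc (a d) (b d)).image fun z : ℤ => δ * (z : ℝ)).card
            ≤ (Finset.Icc (a d) (b d)).card := Finset.card_image_le
        have h2 : ((Finset.Icc (a d) (b d)).card : ℝ) ≤ (4 * sn + 2) * (R / r) := by
          rw [Int.card_Icc]
          have hab : a d ≤ b d :=
            Int.floor_le_floor ((div_le_div_iff_of_pos_right hδ0).mpr (by linarith))
          have hnn : (0:ℤ) ≤ b d + 1 - a d := by omega
          have h3 : ((b d + 1 - a d).toNat : ℝ) = ((b d : ℝ) + 1 - a d) := by
            have h4 := congrArg (fun z : ℤ => (z : ℝ)) (Int.toNat_of_nonneg hnn)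
            push_cast at h4 ⊢
            linarith
          rw [h3]
          have hbu : (b d : ℝ) ≤ (x d + R) / δ := Int.floor_le _
          have hal : (x d - R) / δ - 1 < a d := by
            have := Int.lt_floor_add_one ((x d - R) / δ); linarith
          have hRr : 1 < R / r := (one_lt_div hr).mpr hrR
          have hδr : 2 * R / δ = 4 * sn * (R / r) := by
            rw [hδ]; field_simp; ring
          have : (b d : ℝ) + 1 - a d < 2 * R / δ + 2 := by
            have : (x d + R) / δ - (x d - R) / δ = 2 * R / δ := by field_simp; ring
            linarith
          nlinarith [hδ0, hr]
        calc (((Finset.Icc (a d) (b d)).image fun z : ℤ => δ * (z : ℝ)).card : ℝ)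
            ≤ ((Finset.Icc (a d) (b d)).card : ℝ) := by exact_mod_cast h1
          _ ≤ (4 * sn + 2) * (R / r) := h2
      calc (∏ d, (((Finset.Icc (a d) (b d)).image fun z : ℤ => δ * (z : ℝ)).card : ℝ))
          ≤ ∏ _d : Fin n, (4 * sn + 2) * (R / r) :=
            Finset.prod_le_prod (fun d _ => by positivity) (fun d _ => hbound d)
        _ = ((4 * sn + 2) * (R / r)) ^ n := by simp
    calc (S0.card : ℝ) ≤ ((4 * sn + 2) * (R / r)) ^ n := hcard
      _ = (4 * sn + 2) ^ n * (R / r) ^ (n : ℝ) := by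
          rw [mul_pow, Real.rpow_natCast]
  · intro y hy
    set p : Fin n → ℝ := fun d => δ * ⌊y d / δ⌋ with hp
    have hyx : ∀ d, |y d - x d| < R := fun d => lt_of_le_of_lt (coord_dist_le y x d) (mem_ball.mp hy)
    have hpS0 : p ∈ S0 := by
      rw [hS0, Fintype.mem_piFinset]
      intro d
      apply Finset.mem_image_of_mem
      rw [Finset.mem_Icc]
      constructor
      · apply Int.floor_le_floor
        have := abs_lt.mp (hyx d)
        exact (div_le_div_iff_of_pos_right hδ0).mpr (by linarith)
      · apply Int.floor_le_floor
        have := abs_lt.mp (hyx d)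
        exact (div_le_div_iff_of_pos_right hδ0).mpr (by linarith)
    have hmem : (WithLp.equiv 2 (Fin n → ℝ)).symm p ∈
        S0.map (WithLp.equiv 2 (Fin n → ℝ)).symm.toEmbedding :=
      Finset.mem_map_equiv.mpr (by simpa using hpS0)
    refine Set.mem_biUnion hmem ?_
    · have hcoord : ∀ d, |y d - ((WithLp.equiv 2 (Fin n → ℝ)).symm p) d| ≤ δ := by
        intro d
        have h1 : ((WithLp.equiv 2 (Fin n → ℝ)).symm p) d = p d := rfl
        rw [h1, hp]
        have hfl := Int.floor_le (y d / δ)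
        have hfu := Int.lt_floor_add_one (y d / δ)
        rw [abs_le]
        constructor
        · have : δ * (y d / δ) < δ * (⌊y d / δ⌋ + 1) := by
            exact mul_lt_mul_of_pos_left hfu hδ0
          have hyd : δ * (y d / δ) = y d := by field_simp
          simp only []
          nlinarith
        · have : δ * (⌊y d / δ⌋ : ℝ) ≤ δ * (y d / δ) := mul_le_mul_of_nonneg_left hfl hδ0.le
          have hyd : δ * (y d / δ) = y d := by field_simp
          simp only []
          nlinarith
      have := dist_le_sqrt_mul y ((WithLp.equiv 2 (Fin n → ℝ)).symm p) δ hδ0.le hcoord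
      rw [mem_ball]
      have hhalf : sn * δ = r / 2 := by rw [hδ]; field_simp
      rw [← hsn] at this
      calc dist y ((WithLp.equiv 2 (Fin n → ℝ)).symm p) ≤ sn * δ := this
        _ = r / 2 := hhalf
        _ < r := by linarith


lemma volume_boxSet (n : ℕ) (s : Fin n → Set ℝ) (hs : ∀ d, MeasurableSet (s d)) :
    volume {x : EuclideanSpace ℝ (Fin n) | ∀ d, x d ∈ s d} = ∏ d, volume (s d) := by
  have heq : {x : EuclideanSpace ℝ (Fin n) | ∀ d, x d ∈ s d} =
      (MeasurableEquiv.toLp 2 (Fin n → ℝ)).symm ⁻¹' (Set.univ.pi s) := by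
    ext x
    simp only [Set.mem_setOf_eq, Set.mem_preimage, Set.mem_pi, Set.mem_univ, forall_true_left]
    exact Iff.rfl
  rw [heq, (EuclideanSpace.volume_preserving_symm_measurableEquiv_toLp (Fin n)).measure_preimage
      (MeasurableSet.univ_pi hs).nullMeasurableSet, volume_pi_pi]

lemma isOpen_obox {n : ℕ} (a b : Fin n → ℝ) :
    IsOpen {x : EuclideanSpace ℝ (Fin n) | ∀ d, x d ∈ Set.Ioo (a d) (b d)} := by
  have heq : {x : EuclideanSpace ℝ (Fin n) | ∀ d, x d ∈ Set.Ioo (a d) (b d)} =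
      ⋂ d, (EuclideanSpace.proj d : EuclideanSpace ℝ (Fin n) →L[ℝ] ℝ) ⁻¹'
        Set.Ioo (a d) (b d) := by
    ext x; simp [EuclideanSpace.proj]
  rw [heq]
  exact isOpen_iInter_of_finite fun d =>
    isOpen_Ioo.preimage (EuclideanSpace.proj d).continuous

lemma finite_ncard_of_finsets {α : Type} {A : Set α} (N : ℕ)
    (h : ∀ F : Finset α, ↑F ⊆ A → F.card ≤ N) : A.Finite ∧ A.ncard ≤ N := by
  have hfin : A.Finite := by
    by_contra hinf
    obtain ⟨F, hFA, hFcard⟩ := Set.Infinite.exists_subset_card_eq hinf (N + 1)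
    have := h F hFA
    omega
  refine ⟨hfin, ?_⟩
  rw [Set.ncard_eq_toFinset_card _ hfin]
  exact h hfin.toFinset (by simp)

theorem whitney_count_main (n : ℕ) (hn : 0 < n)
    (E : Set (EuclideanSpace ℝ (Fin n))) (hE : E.Nonempty)
    (ι : Type) (c : ι → EuclideanSpace ℝ (Fin n)) (l : ι → ℝ)
    (Q : ι → Set (EuclideanSpace ℝ (Fin n)))
    (hQ : ∀ i, Q i = {x | ∀ d, x d ∈ Set.Icc (c i d) (c i d + l i)})
    (hdisj : Pairwise fun i j => Disjoint (interior (Q i)) (interior (Q j)))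
    (hWhitney : ∀ i,
      Real.sqrt n * l i ≤ sInf ((fun y => Metric.infDist y E) '' Q i) ∧
      sInf ((fun y => Metric.infDist y E) '' Q i) ≤ 4 * Real.sqrt n * l i)
    (ς s : ℝ) (hsς : s < ς) (hs0 : 0 ≤ s)
    (C₀ : ℝ) (hC₀ : 0 < C₀)
    (hcov : ∀ x ∈ E, ∀ r R : ℝ, 0 < r → r < R →
      ∃ S : Finset (EuclideanSpace ℝ (Fin n)), (S.card : ℝ) ≤ C₀ * (R / r) ^ s ∧
        E ∩ ball x R ⊆ ⋃ y ∈ S, ball y r) :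
    ∃ C : ℝ, 0 < C ∧ ∀ x ∈ E, ∀ R : ℝ, 0 < R → ∀ k : ℤ, (2 : ℝ) ^ (-k) < R →
      {i | l i = 2 ^ (-k) ∧ Q i ⊆ ball x R}.Finite ∧
      ({i | l i = 2 ^ (-k) ∧ Q i ⊆ ball x R}.ncard : ℝ) ≤
        C * R ^ ς * (2 : ℝ) ^ ((k : ℝ) * ς) := by
  classical
  set sn := Real.sqrt n with hsn
  have hsn1 : 1 ≤ sn := Real.one_le_sqrt.mpr (by exact_mod_cast hn)
  have hsn0 : 0 < sn := lt_of_lt_of_le one_pos hsn1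
  set K : ℕ := ⌈((14:ℝ) * sn) ^ n⌉₊ with hK
  have hK0 : (0:ℝ) < K := by
    have h14 : (1:ℝ) ≤ (14 * sn) ^ n := one_le_pow₀ (by linarith)
    have := Nat.le_ceil ((14:ℝ) * sn) -- dummy
    calc (0:ℝ) < 1 := one_pos
      _ ≤ (14 * sn) ^ n := h14
      _ ≤ K := Nat.le_ceil _
  have hς0 : 0 < ς := lt_of_le_of_lt hs0 hsς
  refine ⟨(K : ℝ) * C₀ * (6 * sn + 2) ^ ς, by positivity, ?_⟩
  intro x hx R hR k hk
  set r : ℝ := (2:ℝ) ^ (-k) with hr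
  have hr0 : 0 < r := by positivity
  set A := {i | l i = r ∧ Q i ⊆ ball x R} with hA
  set R' := (6 * sn + 2) * R with hR'
  have hRR' : R < R' := by nlinarith
  have hrR' : r < R' := lt_trans hk hRR'
  obtain ⟨T, hTcard, hTcov⟩ := hcov x hx r R' hr0 hrR'
  have key : ∀ i ∈ A, ∃ z ∈ T, Q i ⊆ ball z (7 * sn * r) := by
    intro i hi
    obtain ⟨hli, hQb⟩ := hi
    have hci : c i ∈ Q i := by
      rw [hQ i]; intro d; exact ⟨le_refl _, by rw [hli]; linarith⟩
    have hdiam : ∀ p ∈ Q i, ∀ q ∈ Q i, dist p q ≤ sn * r := by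
      intro p hp q hq
      apply dist_le_sqrt_mul _ _ r hr0.le
      intro d
      rw [hQ i] at hp hq
      obtain ⟨h1, h2⟩ := hp d
      obtain ⟨h3, h4⟩ := hq d
      rw [hli] at h2 h4
      rw [abs_le]; constructor <;> linarith
    have himg : ((fun y => Metric.infDist y E) '' Q i).Nonempty := ⟨_, ⟨c i, hci, rfl⟩⟩
    have hub : sInf ((fun y => Metric.infDist y E) '' Q i) < 4 * sn * r + r := by
      have := (hWhitney i).2
      rw [hli] at this
      linarith
    obtain ⟨v, hv, hvlt⟩ := exists_lt_of_csInf_lt himg hub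
    obtain ⟨y, hyQ, rfl⟩ := hv
    obtain ⟨e, heE, hye⟩ := (Metric.infDist_lt_iff hE).mp hvlt
    have hex : e ∈ ball x R' := by
      have h1 : dist e x ≤ dist e y + dist y x := dist_triangle _ _ _
      have h2 : dist y x < R := mem_ball.mp (hQb hyQ)
      have h3 : dist e y < 4 * sn * r + r := by rw [dist_comm]; exact hye
      rw [mem_ball]
      have hrR : r < R := hk
      nlinarith
    have := hTcov ⟨heE, hex⟩
    simp only [Set.mem_iUnion, exists_prop] at this
    obtain ⟨z, hzT, hez⟩ := this
    refine ⟨z, hzT, ?_⟩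
    intro p hp
    rw [mem_ball]
    have h1 : dist p y ≤ sn * r := hdiam p hp y hyQ
    have h3 : dist e z < r := mem_ball.mp hez
    calc dist p z ≤ dist p y + dist y e + dist e z := dist_triangle4 _ _ _ _
      _ < sn * r + (4 * sn * r + r) + r := by linarith
      _ ≤ 7 * sn * r := by nlinarith
  have key' : ∀ i : ι, ∃ z : EuclideanSpace ℝ (Fin n),
      i ∈ A → z ∈ T ∧ Q i ⊆ ball z (7 * sn * r) := by
    intro i
    by_cases hi : i ∈ A
    · obtain ⟨z, hz1, hz2⟩ := key i hi; exact ⟨z, fun _ => ⟨hz1, hz2⟩⟩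
    · exact ⟨x, fun h => absurd h hi⟩
  choose g hg using key'
  have fiber : ∀ F : Finset ι, ↑F ⊆ A →
      ∀ z, (F.filter (fun i => g i = z)).card ≤ K := by
    intro F hF z
    set Fz := F.filter (fun i => g i = z) with hFz
    set O : ι → Set (EuclideanSpace ℝ (Fin n)) :=
      fun i => {p | ∀ d, p d ∈ Set.Ioo (c i d) (c i d + l i)} with hO
    have hOQ : ∀ i, O i ⊆ Q i := by
      intro i p hp
      rw [hQ i]; intro d; exact Set.Ioo_subset_Icc_self (hp d)
    have hOint : ∀ i, O i ⊆ interior (Q i) := fun i =>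
      interior_maximal (hOQ i) (isOpen_obox _ _)
    have hdisjO : (↑Fz : Set ι).PairwiseDisjoint O := by
      intro i _ j _ hij
      exact (hdisj hij).mono (hOint i) (hOint j)
    have hvolO : ∀ i ∈ Fz, volume (O i) = ENNReal.ofReal r ^ n := by
      intro i hi
      have hli : l i = r := (hF (Finset.mem_filter.mp hi).1).1
      rw [hO]
      rw [volume_boxSet n (fun d => Set.Ioo (c i d) (c i d + l i)) (fun d => measurableSet_Ioo)]
      simp [Real.volume_Ioo, hli]
    rcases Finset.eq_empty_or_nonempty Fz with hFe | ⟨i₀, hi₀⟩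
    · simp [hFe]
    have hQz : ∀ i ∈ Fz, Q i ⊆ ball z (7 * sn * r) := by
      intro i hi
      have h := hg i (hF (Finset.mem_filter.mp hi).1)
      rw [(Finset.mem_filter.mp hi).2] at h
      exact h.2
    have hsub : ∀ i ∈ Fz, O i ⊆ {p : EuclideanSpace ℝ (Fin n) |
        ∀ d, p d ∈ Set.Icc (z d - 7 * sn * r) (z d - 7 * sn * r + 14 * sn * r)} := by
      intro i hi p hp
      have hmem : p ∈ ball z (7 * sn * r) := hQz i hi (hOQ i hp)
      intro d
      have hcd := coord_dist_le p z d
      have hd := mem_ball.mp hmem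
      rw [abs_le] at hcd
      exact Set.mem_Icc.mpr ⟨by linarith [hcd.1], by linarith [hcd.2]⟩
    have hmeas : ∀ i ∈ Fz, MeasurableSet (O i) := fun i _ => (isOpen_obox _ _).measurableSet
    have hsum := measure_biUnion_finset (μ := (volume : Measure (EuclideanSpace ℝ (Fin n)))) hdisjO hmeas
    have hcount : (Fz.card : ℝ≥0∞) * ENNReal.ofReal r ^ n ≤ ENNReal.ofReal (14 * sn * r) ^ n := by
      calc (Fz.card : ℝ≥0∞) * ENNReal.ofReal r ^ n = ∑ i ∈ Fz, volume (O i) := by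
            rw [Finset.sum_congr rfl hvolO, Finset.sum_const, nsmul_eq_mul]
        _ = volume (⋃ i ∈ Fz, O i) := hsum.symm
        _ ≤ volume {p : EuclideanSpace ℝ (Fin n) |
            ∀ d, p d ∈ Set.Icc (z d - 7 * sn * r) (z d - 7 * sn * r + 14 * sn * r)} :=
            measure_mono (Set.iUnion₂_subset hsub)
        _ = ENNReal.ofReal (14 * sn * r) ^ n := by
            rw [volume_boxSet n _ (fun d => measurableSet_Icc)]
            simp [Real.volume_Icc]
    have hcard' : (Fz.card : ℝ≥0∞) ≤ ENNReal.ofReal ((14 * sn) ^ n) := by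
      have hsplit : ENNReal.ofReal (14 * sn * r) ^ n
          = ENNReal.ofReal ((14 * sn) ^ n) * ENNReal.ofReal r ^ n := by
        rw [show (14 : ℝ) * sn * r = (14 * sn) * r by ring, ENNReal.ofReal_mul (by positivity),
          mul_pow, ← ENNReal.ofReal_pow (by positivity)]
      rw [hsplit] at hcount
      exact (ENNReal.mul_le_mul_iff_left
        (by positivity) (ENNReal.pow_ne_top ENNReal.ofReal_ne_top)).mp hcount
    rcases Nat.eq_zero_or_pos Fz.card with h0 | hpos
    · omega
    · have : (Fz.card : ℝ) ≤ (14 * sn) ^ n :=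
        (ENNReal.natCast_le_ofReal (by omega)).mp hcard'
      have h2 : (Fz.card : ℝ) ≤ (K : ℝ) := this.trans (Nat.le_ceil _)
      exact_mod_cast h2
  have hFbound : ∀ F : Finset ι, ↑F ⊆ A → F.card ≤ K * T.card := by
    intro F hF
    apply Finset.card_le_mul_card_image_of_maps_to (f := g) (t := T)
    · intro i hi
      exact (hg i (hF hi)).1
    · intro z _
      exact fiber F hF z
  obtain ⟨hfin, hcard⟩ := finite_ncard_of_finsets (K * T.card) hFbound
  refine ⟨hfin, ?_⟩
  -- real arithmetic
  have hRr1 : 1 < R / r := (one_lt_div hr0).mpr hk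
  have hpow : (R' / r) ^ s ≤ (6 * sn + 2) ^ ς * (R ^ ς * (2:ℝ) ^ ((k:ℝ) * ς)) := by
    have hsplit : R' / r = (6 * sn + 2) * (R / r) := by rw [hR']; ring
    have h1 : (R' / r) ^ s = (6 * sn + 2) ^ s * (R / r) ^ s := by
      rw [hsplit, Real.mul_rpow (by positivity) (by positivity)]
    have h2 : (6 * sn + 2 : ℝ) ^ s ≤ (6 * sn + 2) ^ ς :=
      Real.rpow_le_rpow_of_exponent_le (by linarith) hsς.le
    have h3 : (R / r) ^ s ≤ (R / r) ^ ς :=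
      Real.rpow_le_rpow_of_exponent_le hRr1.le hsς.le
    have h4 : (R / r) ^ ς = R ^ ς * (2:ℝ) ^ ((k:ℝ) * ς) := by
      rw [Real.div_rpow hR.le hr0.le]
      have hrς : r ^ ς = ((2:ℝ) ^ ((k:ℝ) * ς))⁻¹ := by
        rw [hr, show ((2:ℝ) ^ (-k) : ℝ) = (2:ℝ) ^ ((-k : ℤ) : ℝ) from
          (Real.rpow_intCast 2 (-k)).symm, ← Real.rpow_mul (by norm_num),
          ← Real.rpow_neg (by norm_num)]
        push_cast
        ring_nf
      rw [hrς, div_eq_mul_inv, inv_inv]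
    calc (R' / r) ^ s = (6 * sn + 2) ^ s * (R / r) ^ s := h1
      _ ≤ (6 * sn + 2) ^ ς * (R / r) ^ ς := by
          apply mul_le_mul h2 h3 (by positivity) (by positivity)
      _ = (6 * sn + 2) ^ ς * (R ^ ς * (2:ℝ) ^ ((k:ℝ) * ς)) := by rw [h4]
  have hKT : ((K * T.card : ℕ) : ℝ) = (K : ℝ) * (T.card : ℝ) := by push_cast; ring
  calc (A.ncard : ℝ) ≤ ((K * T.card : ℕ) : ℝ) := by exact_mod_cast hcard
    _ = (K : ℝ) * (T.card : ℝ) := hKT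
    _ ≤ (K : ℝ) * (C₀ * (R' / r) ^ s) := by
        apply mul_le_mul_of_nonneg_left hTcard hK0.le
    _ ≤ (K : ℝ) * (C₀ * ((6 * sn + 2) ^ ς * (R ^ ς * (2:ℝ) ^ ((k:ℝ) * ς)))) := by
        apply mul_le_mul_of_nonneg_left _ hK0.le
        apply mul_le_mul_of_nonneg_left hpow hC₀.le
    _ = (K : ℝ) * C₀ * (6 * sn + 2) ^ ς * R ^ ς * (2:ℝ) ^ ((k:ℝ) * ς) := by ring
    _ = (K : ℝ) * C₀ * (6 * sn + 2) ^ ς * R ^ ς * (2:ℝ) ^ ((k:ℝ) * ς) := rfl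


/-- The Assouad dimension of a subset of `ℝⁿ`. -/
noncomputable def dimA {n : ℕ} (E : Set (EuclideanSpace ℝ (Fin n))) : ℝ :=
  sInf {ς : ℝ | 0 ≤ ς ∧ ∃ C : ℝ, 0 < C ∧ ∀ x ∈ E, ∀ r R : ℝ, 0 < r → r < R →
    ∃ S : Finset (EuclideanSpace ℝ (Fin n)), (S.card : ℝ) ≤ C * (R / r) ^ ς ∧
      E ∩ ball x R ⊆ ⋃ y ∈ S, ball y r}

/-- Counting Whitney cubes of generation `k` contained in a ball `B(x,R)` centred at
`x ∈ E`: for every `ς > dim_A(E)` there is a constant `C` with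
`W_k(B(x,R)) ≤ C R^ς 2^{kς}` whenever `2^{-k} < R`. -/
theorem stmt_8 (n : ℕ) (hn : 0 < n)
    (E : Set (EuclideanSpace ℝ (Fin n))) (hE : E.Nonempty) (hEc : IsClosed E)
    (ι : Type) (c : ι → EuclideanSpace ℝ (Fin n)) (l : ι → ℝ)
    (Q : ι → Set (EuclideanSpace ℝ (Fin n)))
    (hQ : ∀ i, Q i = {x | ∀ d, x d ∈ Set.Icc (c i d) (c i d + l i)})
    (hdyadic : ∀ i, ∃ m : ℤ, l i = 2 ^ (-m))
    (hcover : (⋃ i, Q i) = Eᶜ)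
    (hdisj : Pairwise fun i j => Disjoint (interior (Q i)) (interior (Q j)))
    (hWhitney : ∀ i,
      Real.sqrt n * l i ≤ sInf ((fun y => Metric.infDist y E) '' Q i) ∧
      sInf ((fun y => Metric.infDist y E) '' Q i) ≤ 4 * Real.sqrt n * l i)
    (hadj : ∀ i j, (Q i ∩ Q j).Nonempty → l i ≤ 4 * l j)
    (ς : ℝ) (hς : dimA E < ς) :
    ∃ C : ℝ, 0 < C ∧ ∀ x ∈ E, ∀ R : ℝ, 0 < R → ∀ k : ℤ, (2 : ℝ) ^ (-k) < R →
      {i | l i = 2 ^ (-k) ∧ Q i ⊆ ball x R}.Finite ∧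
      ({i | l i = 2 ^ (-k) ∧ Q i ⊆ ball x R}.ncard : ℝ) ≤
        C * R ^ ς * (2 : ℝ) ^ ((k : ℝ) * ς) := by
  have hne : ({ς : ℝ | 0 ≤ ς ∧ ∃ C : ℝ, 0 < C ∧ ∀ x ∈ E, ∀ r R : ℝ, 0 < r → r < R →
      ∃ S : Finset (EuclideanSpace ℝ (Fin n)), (S.card : ℝ) ≤ C * (R / r) ^ ς ∧
        E ∩ ball x R ⊆ ⋃ y ∈ S, ball y r}).Nonempty := by
    refine ⟨(n : ℝ), by positivity, (4 * Real.sqrt n + 2) ^ n, by positivity, ?_⟩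
    intro x hx r R hr hrR
    obtain ⟨S, h1, h2⟩ := grid_cover n hn x r R hr hrR
    exact ⟨S, h1, Set.inter_subset_right.trans h2⟩
  have hς' : sInf {ς : ℝ | 0 ≤ ς ∧ ∃ C : ℝ, 0 < C ∧ ∀ x ∈ E, ∀ r R : ℝ, 0 < r → r < R →
      ∃ S : Finset (EuclideanSpace ℝ (Fin n)), (S.card : ℝ) ≤ C * (R / r) ^ ς ∧
        E ∩ ball x R ⊆ ⋃ y ∈ S, ball y r} < ς := hς
  obtain ⟨s, ⟨hs0, C₀, hC₀, hcov⟩, hsς⟩ := exists_lt_of_csInf_lt hne hς'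
  exact whitney_count_main n hn E hE ι c l Q hQ hdisj hWhitney ς s hsς hs0 C₀ hC₀ hcov
end
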